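/- Let G1 and G2 be torsion-free abelian groups, let Si be a finite, symmetric generating set of Gi for i = 1,2, and let φ be a graph isomorphism from Cay(G1;S1) to Cay(G2;S2). Then φ is an affine bijection: there exist a group isomorphism α : G1 → G2 and h ∈ G2 with φ(x) = h · α(x) for all x ∈ G1. -/

import Mathlib

set_option linter.unusedSectionVars false

/-- The Cayley graph of a group `G` with respect to a symmetric set `S`
not containing the identity: `g` is adjacent to `h` iff `g⁻¹ * h ∈ S`. -/
def cayleyGraph {G : Type*} [Group G] (S : Set G)
    (hsymm : ∀ s ∈ S, s⁻¹ ∈ S) (hid : (1 : G) ∉ S) : SimpleGraph G where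
  Adj g h := g⁻¹ * h ∈ S
  symm := by
    constructor
    intro g h hgh
    have h2 := hsymm _ hgh
    simpa [mul_inv_rev] using h2
  loopless := by
    constructor
    intro g hg
    simp only [inv_mul_cancel] at hg
    exact hid hg

/-- A monoid is torsion-free if its only element of finite order is `1`
(the definition of `Monoid.IsTorsionFree` in the Mathlib this was written for). -/
def Monoid.IsTorsionFree (G : Type*) [Monoid G] : Prop :=
  ∀ g : G, g ≠ 1 → ¬IsOfFinOrder g

namespace RyabchenkoProof

/-! ### Torsion-free helpers -/

section TF
variable {H : Type*} [CommGroup H]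

lemma tf_pow_eq_one (htf : Monoid.IsTorsionFree H) {g : H} {n : ℕ} (hn : n ≠ 0)
    (h : g ^ n = 1) : g = 1 := by
  by_contra hg
  exact htf g hg (isOfFinOrder_iff_pow_eq_one.2 ⟨n, Nat.pos_of_ne_zero hn, h⟩)

lemma tf_pow_injective (htf : Monoid.IsTorsionFree H) {g h : H} {n : ℕ} (hn : n ≠ 0)
    (hgh : g ^ n = h ^ n) : g = h := by
  have : (g * h⁻¹) ^ n = 1 := by
    rw [mul_pow, inv_pow, hgh, mul_inv_cancel]
  exact mul_inv_eq_one.mp (tf_pow_eq_one htf hn this)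

/-- the product over a symmetric finite set (without `1`) in a torsion-free
commutative group is `1`. -/
lemma symprod (htf : Monoid.IsTorsionFree H) (T : Finset H)
    (hsym : ∀ u ∈ T, u⁻¹ ∈ T) (hid : (1 : H) ∉ T) :
    ∏ u ∈ T, u = 1 := by
  refine Finset.prod_involution (fun a _ => a⁻¹) (fun a _ => mul_inv_cancel a)
    (fun a ha _ => ?_) (fun a ha => hsym a ha) (fun a _ => inv_inv a)
  intro hinv
  have hinv' : a⁻¹ = a := hinv
  apply hid
  have h2 : a ^ 2 = 1 := by rw [pow_two]; exact mul_eq_one_iff_inv_eq.mpr hinv' 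
  have h3 := tf_pow_eq_one htf (by norm_num) h2
  rwa [h3] at ha

end TF

/-! ### Additive integer functionals -/

section HomZ
variable {H : Type*} [CommGroup H]

lemma homZ_one {f : H → ℤ} (hf : ∀ x y, f (x * y) = f x + f y) : f 1 = 0 := by
  have := hf 1 1; simp at this; omega

lemma homZ_inv {f : H → ℤ} (hf : ∀ x y, f (x * y) = f x + f y) (u : H) : f u⁻¹ = - f u := by
  have h1 := hf u u⁻¹
  rw [mul_inv_cancel, homZ_one hf] at h1
  omega

lemma homZ_prod {α : Type*} {f : H → ℤ} (hf : ∀ x y, f (x * y) = f x + f y)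
    (T : Finset α) (g : α → H) : f (∏ a ∈ T, g a) = ∑ a ∈ T, f (g a) := by
  classical
  induction T using Finset.induction with
  | empty => simpa using homZ_one hf
  | insert a T' hx ih =>
                    rw [Finset.prod_insert hx, Finset.sum_insert hx, hf, ih]

lemma homZ_pow {f : H → ℤ} (hf : ∀ x y, f (x * y) = f x + f y) (u : H) (n : ℕ) :
    f (u ^ n) = n * f u := by
  induction n with
  | zero => simpa using homZ_one hf
  | succ n ih => rw [pow_succ, hf, ih]; push_cast; ring

/-- In a finitely generated torsion-free commutative group, integer functionals
separate points. -/
lemma exists_functional (hfg : Group.FG H) (htf : Monoid.IsTorsionFree H)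
    {g : H} (hg : g ≠ 1) :
    ∃ f : H → ℤ, (∀ x y, f (x * y) = f x + f y) ∧ f g ≠ 0 := by
  haveI : AddGroup.FG (Additive H) := GroupFG.iff_add_fg.mp hfg
  haveI : Module.Finite ℤ (Additive H) := Module.Finite.iff_addGroup_fg.mpr ‹_›
  haveI : NoZeroSMulDivisors ℤ (Additive H) := by
    constructor
    intro n a hna
    by_contra hc
    push_neg at hc
    obtain ⟨hn, ha⟩ := hc
    have h1 : (Additive.toMul a) ^ (n : ℤ) = 1 := hna
    have h2 : (Additive.toMul a) ^ (n.natAbs) = 1 := by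
      rcases Int.natAbs_eq n with he | he
      · rw [he] at h1
        rw [zpow_natCast] at h1
        exact h1
      · rw [he] at h1
        rw [zpow_neg, zpow_natCast, inv_eq_one] at h1
        exact h1
    have hne : Additive.toMul a ≠ 1 := fun h => ha (by
      have : a = Additive.ofMul 1 := by simpa using h
      simpa using this)
    exact htf _ hne (isOfFinOrder_iff_pow_eq_one.2
      ⟨n.natAbs, Int.natAbs_pos.mpr hn, h2⟩)
  haveI : Module.Free ℤ (Additive H) := Module.free_of_finite_type_torsion_free'
  let b := Module.Free.chooseBasis ℤ (Additive H)
  have hg0 : (Additive.ofMul g) ≠ (0 : Additive H) := by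
    intro h
    exact hg (by simpa using congrArg Additive.toMul h)
  have hex : ∃ i, b.repr (Additive.ofMul g) i ≠ 0 := by
    by_contra hcon
    push_neg at hcon
    apply hg0
    have : b.repr (Additive.ofMul g) = 0 := Finsupp.ext fun i => hcon i
    simpa using (map_eq_zero_iff b.repr (LinearEquiv.injective _)).mp this
  obtain ⟨i, hi⟩ := hex
  refine ⟨fun x => b.repr (Additive.ofMul x) i, fun x y => ?_, hi⟩
  show b.repr (Additive.ofMul (x * y)) i = _
  have h7 : Additive.ofMul (x * y) = Additive.ofMul x + Additive.ofMul y := rfl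
  rw [h7, map_add, Finsupp.add_apply]

/-- In a f.g. torsion-free commutative group, any nonempty finite set has
a strict argmax for some integer functional. -/
lemma exists_strict_argmax (hfg : Group.FG H) (htf : Monoid.IsTorsionFree H)
    (T : Finset H) (hT : T.Nonempty) :
    ∃ a ∈ T, ∃ f : H → ℤ, (∀ x y, f (x * y) = f x + f y) ∧
      ∀ u ∈ T, u ≠ a → f u < f a := by
  classical
  induction T using Finset.strongInductionOn with
  | _ T ih =>
  by_cases hc : ∀ u ∈ T, ∀ v ∈ T, u = v
  · obtain ⟨a, ha⟩ := hT
    exact ⟨a, ha, fun _ => 0, by simp, fun u hu hne => absurd (hc u hu a ha) hne⟩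
  · push_neg at hc
    obtain ⟨u0, hu0, v0, hv0, huv⟩ := hc
    obtain ⟨f1, hf1, hf1ne⟩ := exists_functional hfg htf (g := u0 * v0⁻¹) (by
      intro h; exact huv (mul_inv_eq_one.mp h))
    have hf1sep : f1 u0 ≠ f1 v0 := by
      have h2 := hf1 u0 v0⁻¹
      rw [homZ_inv hf1] at h2
      intro h3
      apply hf1ne
      rw [h2, h3]
      ring
    set m := T.sup' hT f1 with hm
    set T' := T.filter (fun u => f1 u = m) with hT'def
    have hsub : T' ⊆ T := Finset.filter_subset _ _
    obtain ⟨w, hw, hwm⟩ := Finset.exists_mem_eq_sup' hT f1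
    have hT'ne : T'.Nonempty := ⟨w, Finset.mem_filter.2 ⟨hw, hwm.symm⟩⟩
    have hnotmem : ∀ u ∈ T, f1 u < m → u ∉ T' := by
      intro u _ hlt hmem
      exact absurd ((Finset.mem_filter.1 hmem).2) (by omega)
    have hssub : T' ⊂ T := by
      rw [Finset.ssubset_iff_of_subset hsub]
      rcases lt_or_gt_of_ne hf1sep with h | h
      · exact ⟨u0, hu0, hnotmem u0 hu0 (lt_of_lt_of_le h (Finset.le_sup' f1 hv0))⟩
      · exact ⟨v0, hv0, hnotmem v0 hv0 (lt_of_lt_of_le h (Finset.le_sup' f1 hu0))⟩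
    obtain ⟨a, haT', f2, hf2, hstrict2⟩ := ih T' hssub hT'ne
    set B := T.sup' hT (fun u => |f2 u|) with hB
    have hBnn : 0 ≤ B :=
      le_trans (abs_nonneg (f2 hT.choose)) (Finset.le_sup' (fun u => |f2 u|) hT.choose_spec)
    set K := 1 + 2 * B with hK
    have hKpos : 0 < K := by omega
    have haT : a ∈ T := hsub haT'
    have hf1a : f1 a = m := (Finset.mem_filter.1 haT').2
    refine ⟨a, haT, fun x => K * f1 x + f2 x, fun x y => by
      show K * f1 (x * y) + f2 (x * y) = _
      rw [hf1, hf2]; ring, ?_⟩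
    intro u hu hune
    show K * f1 u + f2 u < K * f1 a + f2 a
    by_cases hu' : u ∈ T'
    · have h1 : f1 u = m := (Finset.mem_filter.1 hu').2
      have h2 : f2 u < f2 a := hstrict2 u hu' hune
      rw [h1, hf1a]
      omega
    · have h1 : f1 u ≤ m := Finset.le_sup' f1 hu
      have h2 : f1 u ≠ m := fun h => hu' (Finset.mem_filter.2 ⟨hu, h⟩)
      have h3 : f1 u ≤ m - 1 := by omega
      have hb1 : |f2 u| ≤ B := Finset.le_sup' (fun u => |f2 u|) hu
      have hb2 : |f2 a| ≤ B := Finset.le_sup' (fun u => |f2 u|) haT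
      have h4 : K * f1 u ≤ K * (m - 1) :=
        mul_le_mul_of_nonneg_left h3 (le_of_lt hKpos)
      rw [hf1a]
      have h6 : f2 u - f2 a ≤ 2 * B := by
        have := abs_le.1 hb1
        have := abs_le.1 hb2
        omega
      nlinarith

end HomZ

/-! ### The core rigidity theorem: two torsion-free abelian group structures on
the same set, sharing the identity and having the same Cayley graph with the same
finite symmetric generating set, coincide.

The second group structure is presented through a bijection `ψ : G1 ≃ G2`
with `ψ 1 = 1`; the second multiplication of `u v : G2` is
`m2 ψ u v = ψ (ψ.symm u * ψ.symm v)`. -/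

section Core
variable {G1 G2 : Type*} [CommGroup G1] [CommGroup G2]

/-- transported multiplication -/
def m2 (ψ : G1 ≃ G2) (u v : G2) : G2 := ψ (ψ.symm u * ψ.symm v)

/-- transported inverse -/
def i2 (ψ : G1 ≃ G2) (u : G2) : G2 := ψ (ψ.symm u)⁻¹

/-- transported power -/
def p2 (ψ : G1 ≃ G2) (u : G2) (n : ℕ) : G2 := ψ ((ψ.symm u) ^ n)

variable (ψ : G1 ≃ G2)

@[simp] lemma symm_m2 (u v : G2) : ψ.symm (m2 ψ u v) = ψ.symm u * ψ.symm v := by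
  simp [m2]

@[simp] lemma symm_i2 (u : G2) : ψ.symm (i2 ψ u) = (ψ.symm u)⁻¹ := by simp [i2]

@[simp] lemma symm_p2 (u : G2) (n : ℕ) : ψ.symm (p2 ψ u n) = (ψ.symm u) ^ n := by
  simp [p2]

lemma m2_comm (u v : G2) : m2 ψ u v = m2 ψ v u := by
  unfold m2; rw [mul_comm]

lemma m2_assoc (u v w : G2) : m2 ψ (m2 ψ u v) w = m2 ψ u (m2 ψ v w) := by
  apply ψ.symm.injective; simp [mul_assoc]

lemma m2_cancel_left {u v w : G2} (h : m2 ψ u v = m2 ψ u w) : v = w := by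
  have h2 := congrArg ψ.symm h
  simp only [symm_m2] at h2
  exact ψ.symm.injective (mul_left_cancel h2)

lemma m2_i2_m2 (u w : G2) : m2 ψ (i2 ψ u) (m2 ψ u w) = w := by
  apply ψ.symm.injective; simp

lemma m2_m2_i2 (u w : G2) : m2 ψ u (m2 ψ (i2 ψ u) w) = w := by
  apply ψ.symm.injective; simp

lemma symm_one (hψ1 : ψ 1 = 1) : ψ.symm 1 = 1 := by
  rw [← hψ1]; exact ψ.symm_apply_apply 1

lemma m2_one (hψ1 : ψ 1 = 1) (u : G2) : m2 ψ u 1 = u := by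
  apply ψ.symm.injective; simp [symm_one ψ hψ1]

lemma one_m2 (hψ1 : ψ 1 = 1) (u : G2) : m2 ψ 1 u = u := by
  apply ψ.symm.injective; simp [symm_one ψ hψ1]

lemma p2_succ (u : G2) (n : ℕ) : p2 ψ u (n + 1) = m2 ψ (p2 ψ u n) u := by
  apply ψ.symm.injective; simp [pow_succ]

lemma p2_zero (hψ1 : ψ 1 = 1) (u : G2) : p2 ψ u 0 = 1 := by
  apply ψ.symm.injective; simp [symm_one ψ hψ1]

lemma m2_p2 (u v : G2) (n : ℕ) : p2 ψ (m2 ψ u v) n = m2 ψ (p2 ψ u n) (p2 ψ v n) := by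
  apply ψ.symm.injective; simp [mul_pow]

end Core


section Main
variable {G1 G2 : Type*} [CommGroup G1] [CommGroup G2]
variable (ψ : G1 ≃ G2)

lemma ladder_alg {H : Type*} [CommGroup H] (A B V W : H) (n : ℕ) :
    (A * V ^ n)⁻¹ * (B * W ^ n) = (A⁻¹ * B) * ((V⁻¹ * W) ^ n) := by
  apply Additive.ofMul.injective
  simp only [ofMul_mul, ofMul_inv, ofMul_pow, smul_add, smul_neg, neg_smul]
  abel

/-- **Piece 1**: if `a` is the strict argmax of an integer functional on `S2`,
then the transported multiplication by `a` agrees with the original one. -/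
lemma piece1 (tf1 : Monoid.IsTorsionFree G1)
    {S2 : Set G2} (hψ1 : ψ 1 = 1)
    (hedge : ∀ u v : G2, u⁻¹ * v ∈ S2 ↔ m2 ψ (i2 ψ u) v ∈ S2)
    (hgen2 : Subgroup.closure S2 = ⊤) (hfin2 : S2.Finite)
    (f : G2 → ℤ) (hf : ∀ u v, f (u * v) = f u + f v)
    {a : G2} (ha : a ∈ S2) (hstrict : ∀ u ∈ S2, u ≠ a → f u < f a) :
    ∀ x : G2, m2 ψ x a = x * a := by
  classical
  set v : G2 → G2 := fun x => m2 ψ (i2 ψ x) (x * a) with hvdef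
  have hvS : ∀ x, v x ∈ S2 := by
    intro x
    apply (hedge x (x * a)).1
    simpa using ha
  have hxv : ∀ x, m2 ψ x (v x) = x * a := fun x => m2_m2_i2 ψ x (x * a)
  have hfle : ∀ u ∈ S2, f u ≤ f a := fun u hu =>
    (eq_or_ne u a).elim (fun h => h ▸ le_refl _) (fun h => le_of_lt (hstrict u hu h))
  -- straightness along the a-line
  have hST : ∀ x, v (x * a) = v x := by
    intro x
    set y := m2 ψ x (v (x * a)) with hy
    have hu1 : x⁻¹ * y ∈ S2 := by
      apply (hedge x y).2
      rw [hy, m2_i2_m2]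
      exact hvS (x * a)
    have hyx : m2 ψ y (v x) = x * a * a := by
      rw [hy, m2_assoc, m2_comm ψ (v (x * a)) (v x), ← m2_assoc, hxv, hxv]
    have hu2 : y⁻¹ * (x * a * a) ∈ S2 := by
      apply (hedge y (x * a * a)).2
      rw [← hyx, m2_i2_m2]
      exact hvS x
    have hprod : (x⁻¹ * y) * (y⁻¹ * (x * a * a)) = a * a := by group
    have hfsum : f (x⁻¹ * y) + f (y⁻¹ * (x * a * a)) = f a + f a := by
      rw [← hf, hprod, hf]
    have hu1a : x⁻¹ * y = a := by
      by_contra hne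
      have h1 := hstrict _ hu1 hne
      have h2 := hfle _ hu2
      omega
    have hyxa : y = x * a := by rw [← hu1a]; group
    have h9 : m2 ψ x (v (x * a)) = m2 ψ x (v x) := by
      rw [hxv x, ← hy]
      exact hyxa
    exact m2_cancel_left ψ h9
  have hvpow : ∀ (n : ℕ) (x : G2), v (x * a ^ n) = v x := by
    intro n
    induction n with
    | zero => intro x; rw [pow_zero, mul_one]
    | succ n ih =>
      intro x
      have h1 : x * a ^ (n + 1) = (x * a ^ n) * a := by rw [pow_succ, mul_assoc]
      rw [h1, hST (x * a ^ n)]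
      exact ih x
  have hstraight : ∀ (n : ℕ) (x : G2), x * a ^ n = m2 ψ x (p2 ψ (v x) n) := by
    intro n
    induction n with
    | zero => intro x; rw [pow_zero, mul_one, p2_zero ψ hψ1, m2_one ψ hψ1]
    | succ n ih =>
      intro x
      have h1 : x * a ^ (n + 1) = (x * a ^ n) * a := by rw [pow_succ, mul_assoc]
      rw [h1, ← hxv (x * a ^ n), hvpow n x, ih x, m2_assoc, ← p2_succ]
  -- the ladder with pigeonhole
  have hladder : ∀ t ∈ S2, ∀ x, v (x * t) = v x := by
    intro t ht x
    set D := m2 ψ (i2 ψ (v x)) (v (x * t)) with hD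
    set r : ℕ → G2 := fun n => m2 ψ (i2 ψ (x * a ^ n)) (x * t * a ^ n) with hr
    have hrS : ∀ n, r n ∈ S2 := by
      intro n
      apply (hedge _ _).1
      have h1 : (x * a ^ n)⁻¹ * (x * t * a ^ n) = t := by
        rw [mul_right_comm x t (a ^ n), inv_mul_cancel_left]
      rw [h1]
      exact ht
    have hrform : ∀ n, r n = m2 ψ (r 0) (p2 ψ D n) := by
      intro n
      have e1 := hstraight n x
      have e2 := hstraight n (x * t)
      have e0 : r n = m2 ψ (i2 ψ (m2 ψ x (p2 ψ (v x) n)))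
          (m2 ψ (x * t) (p2 ψ (v (x * t)) n)) := by
        show m2 ψ (i2 ψ (x * a ^ n)) (x * t * a ^ n) = _
        rw [e1, e2]
      have e3 : r 0 = m2 ψ (i2 ψ x) (x * t) := by
        show m2 ψ (i2 ψ (x * a ^ 0)) (x * t * a ^ 0) = _
        rw [pow_zero, mul_one, mul_one]
      rw [e0, e3, hD]
      apply ψ.symm.injective
      simp only [symm_m2, symm_i2, symm_p2]
      exact ladder_alg _ _ _ _ n
    haveI : Finite ↥S2 := hfin2.to_subtype
    obtain ⟨mm, nn, hmn, hpig⟩ :=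
      Finite.exists_ne_map_eq_of_infinite (fun n : ℕ => (⟨r n, hrS n⟩ : S2))
    have hpig2 : r mm = r nn := congrArg Subtype.val hpig
    rw [hrform mm, hrform nn] at hpig2
    have hpow : p2 ψ D mm = p2 ψ D nn := m2_cancel_left ψ hpig2
    have hpow2 : (ψ.symm D) ^ mm = (ψ.symm D) ^ nn := by
      have := congrArg ψ.symm hpow
      simpa using this
    have hD1 : ψ.symm D = 1 := by
      rcases hmn.lt_or_gt with h | h
      · have h2 : (ψ.symm D) ^ (nn - mm) = 1 := by
          have h3 : (ψ.symm D) ^ mm * (ψ.symm D) ^ (nn - mm) = (ψ.symm D) ^ mm * 1 := by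
            rw [mul_one, ← pow_add]
            rw [Nat.add_sub_cancel' (le_of_lt h)]
            exact hpow2.symm
          exact mul_left_cancel h3
        exact tf_pow_eq_one tf1 (Nat.sub_ne_zero_of_lt h) h2
      · have h2 : (ψ.symm D) ^ (mm - nn) = 1 := by
          have h3 : (ψ.symm D) ^ nn * (ψ.symm D) ^ (mm - nn) = (ψ.symm D) ^ nn * 1 := by
            rw [mul_one, ← pow_add]
            rw [Nat.add_sub_cancel' (le_of_lt h)]
            exact hpow2
          exact mul_left_cancel h3
        exact tf_pow_eq_one tf1 (Nat.sub_ne_zero_of_lt h) h2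
    have hD2 : (ψ.symm (v x))⁻¹ * ψ.symm (v (x * t)) = 1 := by
      have := congrArg ψ.symm hD
      simp only [symm_m2, symm_i2] at this
      rw [← this, hD1]
    apply ψ.symm.injective
    symm
    exact (mul_inv_eq_one.mp (by rwa [mul_comm] at hD2)).symm
  -- propagate over the whole group
  have hall : ∀ g : G2, ∀ x, v (x * g) = v x := by
    intro g
    have hg : g ∈ Subgroup.closure S2 := by rw [hgen2]; trivial
    refine Subgroup.closure_induction ?_ ?_ ?_ ?_ hg
    · intro u hu x; exact hladder u hu x
    · intro x; rw [mul_one]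
    · intro g h _ _ hgi hhi x
      rw [← mul_assoc, hhi (x * g), hgi x]
    · intro g _ hgi x
      have h2 := hgi (x * g⁻¹)
      rw [mul_assoc, inv_mul_cancel, mul_one] at h2
      exact h2.symm
  have hv1 : v 1 = a := by
    have hi1 : i2 ψ 1 = 1 := by
      apply ψ.symm.injective
      simp [symm_one ψ hψ1]
    show m2 ψ (i2 ψ 1) (1 * a) = a
    rw [hi1, one_m2 ψ hψ1, one_mul]
  intro x
  have h1 : v x = a := by
    have h2 := hall x 1
    rw [one_mul] at h2
    rw [h2, hv1]
  calc m2 ψ x a = m2 ψ x (v x) := by rw [h1]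
    _ = x * a := hxv x

/-- The subgroup of `G2` where the two multiplications agree. -/
def Zsub (hψ1 : ψ 1 = 1) : Subgroup G2 where
  carrier := {z | ∀ x, m2 ψ x z = x * z}
  one_mem' := by
    intro x
    rw [m2_one ψ hψ1, mul_one]
  mul_mem' := by
    intro za zb hza hzb
    intro x
    have h1 : za * zb = m2 ψ za zb := (hzb za).symm
    rw [h1, ← m2_assoc, hza x, hzb (x * za), ← h1, mul_assoc]
  inv_mem' := by
    intro z hz
    intro x
    have hinj : ∀ u1 u2 : G2, m2 ψ u1 z = m2 ψ u2 z → u1 = u2 := by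
      intro u1 u2 h
      have h2 := congrArg ψ.symm h
      simp only [symm_m2] at h2
      exact ψ.symm.injective (mul_right_cancel h2)
    apply hinj
    have hzz : m2 ψ z⁻¹ z = 1 := by
      rw [hz z⁻¹, inv_mul_cancel]
    rw [m2_assoc, hzz, m2_one ψ hψ1, hz (x * z⁻¹), mul_assoc, inv_mul_cancel, mul_one]

lemma mem_Zsub_iff (hψ1 : ψ 1 = 1) (z : G2) :
    z ∈ Zsub ψ hψ1 ↔ ∀ x, m2 ψ x z = x * z := Iff.rfl

lemma i2_of_mem_Zsub (hψ1 : ψ 1 = 1) {z : G2} (hz : z ∈ Zsub ψ hψ1) :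
    i2 ψ z = z⁻¹ := by
  have h1 : m2 ψ (i2 ψ z) z = 1 := by
    apply ψ.symm.injective
    simp [symm_one ψ hψ1]
  rw [hz (i2 ψ z)] at h1
  exact eq_inv_of_mul_eq_one_left h1

lemma p2_of_mem_Zsub (hψ1 : ψ 1 = 1) {z : G2} (hz : z ∈ Zsub ψ hψ1) (n : ℕ) :
    p2 ψ z n = z ^ n := by
  induction n with
  | zero => rw [p2_zero ψ hψ1, pow_zero]
  | succ n ih => rw [p2_succ, hz (p2 ψ z n), ih, pow_succ]

/-- The saturation of `Zsub`. -/
def Wsub (hψ1 : ψ 1 = 1) : Subgroup G2 where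
  carrier := {g | ∃ N : ℕ, 0 < N ∧ g ^ N ∈ Zsub ψ hψ1}
  one_mem' := ⟨1, one_pos, by simpa using (Zsub ψ hψ1).one_mem⟩
  mul_mem' := by
    rintro g h ⟨N, hN, hgN⟩ ⟨M, hM, hhM⟩
    refine ⟨N * M, Nat.mul_pos hN hM, ?_⟩
    rw [mul_pow]
    exact mul_mem (by rw [pow_mul]; exact pow_mem hgN M)
      (by rw [pow_mul']; exact pow_mem hhM N)
  inv_mem' := by
    rintro g ⟨N, hN, h⟩
    exact ⟨N, hN, by rw [inv_pow]; exact inv_mem h⟩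

/-- **The span argument**: every element of `S2` has a power lying in `Zsub`. -/
lemma S2_subset_Wsub (tf1 : Monoid.IsTorsionFree G1) (tf2 : Monoid.IsTorsionFree G2)
    {S2 : Set G2} (hψ1 : ψ 1 = 1)
    (hedge : ∀ u v : G2, u⁻¹ * v ∈ S2 ↔ m2 ψ (i2 ψ u) v ∈ S2)
    (hgen2 : Subgroup.closure S2 = ⊤) (hfin2 : S2.Finite)
    (hsymm2 : ∀ s ∈ S2, s⁻¹ ∈ S2) :
    ∀ s ∈ S2, s ∈ Wsub ψ hψ1 := by
  classical
  intro s hs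
  by_contra hsW
  haveI hfg2 : Group.FG G2 := Group.fg_iff.mpr ⟨S2, hgen2, hfin2⟩
  set W := Wsub ψ hψ1 with hWdef
  haveI hfgQ : Group.FG (G2 ⧸ W) :=
    Group.fg_of_surjective (f := QuotientGroup.mk' W) (QuotientGroup.mk'_surjective W)
  have htfQ : Monoid.IsTorsionFree (G2 ⧸ W) := by
    intro q hq hord
    obtain ⟨n, hn, hqn⟩ := isOfFinOrder_iff_pow_eq_one.1 hord
    obtain ⟨g, rfl⟩ := QuotientGroup.mk_surjective q
    apply hq
    rw [QuotientGroup.eq_one_iff]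
    have hgn : g ^ n ∈ W := by
      rw [← QuotientGroup.eq_one_iff]
      have h2 : ((g ^ n : G2) : G2 ⧸ W) = ((g : G2 ⧸ W)) ^ n := by
        push_cast
        rfl
      rw [h2]
      exact hqn
    obtain ⟨N, hN, hres⟩ := hgn
    exact ⟨n * N, Nat.mul_pos hn hN, by rwa [pow_mul]⟩
  have hsne : ((s : G2 ⧸ W)) ≠ 1 := by
    rw [Ne, QuotientGroup.eq_one_iff]
    exact hsW
  obtain ⟨fq, hfq, hfqs⟩ := exists_functional hfgQ htfQ hsne
  set lam : G2 → ℤ := fun u => fq ((u : G2 ⧸ W)) with hlamdef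
  have hlam : ∀ x y : G2, lam (x * y) = lam x + lam y := by
    intro x y
    show fq ((↑(x * y) : G2 ⧸ W)) = fq _ + fq _
    have h2 : ((↑(x * y) : G2 ⧸ W)) = (x : G2 ⧸ W) * (y : G2 ⧸ W) := by push_cast; rfl
    rw [h2]
    exact hfq _ _
  have hlamW : ∀ w ∈ W, lam w = 0 := by
    intro w hw
    show fq ((w : G2 ⧸ W)) = 0
    rw [(QuotientGroup.eq_one_iff w).2 hw]
    exact homZ_one hfq
  set S2f := hfin2.toFinset with hS2fdef
  have hmem_iff : ∀ u : G2, u ∈ S2f ↔ u ∈ S2 := fun u => hfin2.mem_toFinset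
  have hsf : s ∈ S2f := (hmem_iff s).2 hs
  have hS2fne : S2f.Nonempty := ⟨s, hsf⟩
  set m := S2f.sup' hS2fne lam with hmdef
  have hmpos : 0 < m := by
    have h1 : lam s ≤ m := Finset.le_sup' lam hsf
    have hsinv : s⁻¹ ∈ S2f := (hmem_iff _).2 (hsymm2 s hs)
    have h2 : lam s⁻¹ ≤ m := Finset.le_sup' lam hsinv
    have h3 : lam s⁻¹ = - lam s := homZ_inv hlam s
    have h4 : lam s ≠ 0 := hfqs
    omega
  set T := S2f.filter (fun u => lam u = m) with hTdef
  obtain ⟨w, hw, hwm⟩ := Finset.exists_mem_eq_sup' hS2fne lam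
  have hTne : T.Nonempty := ⟨w, Finset.mem_filter.2 ⟨hw, hwm.symm⟩⟩
  obtain ⟨a, haT, mu, hmu, hmustrict⟩ := exists_strict_argmax hfg2 tf2 T hTne
  have haS2f : a ∈ S2f := (Finset.filter_subset _ _) haT
  have haS2 : a ∈ S2 := (hmem_iff a).1 haS2f
  have hlama : lam a = m := (Finset.mem_filter.1 haT).2
  set B := S2f.sup' hS2fne (fun u => |mu u|) with hBdef
  have hBnn : 0 ≤ B := le_trans (abs_nonneg (mu s)) (Finset.le_sup' (fun u => |mu u|) hsf)
  set K := 1 + 2 * B with hKdef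
  have hKpos : 0 < K := by omega
  set f : G2 → ℤ := fun x => K * lam x + mu x with hfdef
  have hfhom : ∀ x y : G2, f (x * y) = f x + f y := by
    intro x y
    show K * lam (x * y) + mu (x * y) = _
    rw [hlam, hmu]
    ring
  have hfstrict : ∀ u ∈ S2, u ≠ a → f u < f a := by
    intro u hu hune
    have huf : u ∈ S2f := (hmem_iff u).2 hu
    show K * lam u + mu u < K * lam a + mu a
    by_cases hu' : u ∈ T
    · have h1 : lam u = m := (Finset.mem_filter.1 hu').2
      have h2 : mu u < mu a := hmustrict u hu' hune
      rw [h1, hlama]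
      omega
    · have h1 : lam u ≤ m := Finset.le_sup' lam huf
      have h2 : lam u ≠ m := fun h => hu' (Finset.mem_filter.2 ⟨huf, h⟩)
      have h3 : lam u ≤ m - 1 := by omega
      have hb1 : |mu u| ≤ B := Finset.le_sup' (fun u => |mu u|) huf
      have hb2 : |mu a| ≤ B := Finset.le_sup' (fun u => |mu u|) haS2f
      have h4 : K * lam u ≤ K * (m - 1) :=
        mul_le_mul_of_nonneg_left h3 (le_of_lt hKpos)
      rw [hlama]
      have h6 : mu u - mu a ≤ 2 * B := by
        have := abs_le.1 hb1
        have := abs_le.1 hb2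
        omega
      nlinarith
  have haZ : a ∈ Zsub ψ hψ1 := by
    intro x
    exact piece1 ψ tf1 hψ1 hedge hgen2 hfin2 f hfhom haS2 hfstrict x
  have haW : a ∈ W := ⟨1, one_pos, by simpa using haZ⟩
  have h7 : lam a = 0 := hlamW a haW
  omega

lemma step_alg {H : Type*} [CommGroup H] (A B C D : H) :
    (A * B) * (C * D)⁻¹ * (B * C⁻¹)⁻¹ = A * D⁻¹ := by
  apply Additive.ofMul.injective
  simp only [ofMul_mul, ofMul_inv]
  abel

lemma coset_alg {H : Type*} [CommGroup H] (B C D : H) :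
    B * D * (C * D)⁻¹ = B * C⁻¹ := by
  apply Additive.ofMul.injective
  simp only [ofMul_mul, ofMul_inv]
  abel

/-- **The core theorem**: the transported multiplication coincides with the
original one. -/
theorem core (tf1 : Monoid.IsTorsionFree G1) (tf2 : Monoid.IsTorsionFree G2)
    {S2 : Set G2} (hψ1 : ψ 1 = 1)
    (hedge : ∀ u v : G2, u⁻¹ * v ∈ S2 ↔ m2 ψ (i2 ψ u) v ∈ S2)
    (hgen2 : Subgroup.closure S2 = ⊤) (hfin2 : S2.Finite)
    (hsymm2 : ∀ s ∈ S2, s⁻¹ ∈ S2) (hid2 : (1 : G2) ∉ S2) :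
    ∀ x u : G2, m2 ψ x u = x * u := by
  classical
  set Z := Zsub ψ hψ1 with hZdef
  suffices hSZ : ∀ s ∈ S2, s ∈ Z by
    have hZtop : Z = ⊤ := by
      apply top_unique
      rw [← hgen2]
      exact (Subgroup.closure_le Z).mpr hSZ
    intro x u
    have hu : u ∈ Z := by rw [hZtop]; exact Subgroup.mem_top u
    exact hu x
  -- quotient setup
  have hWall : ∀ s ∈ S2, s ∈ Wsub ψ hψ1 :=
    S2_subset_Wsub ψ tf1 tf2 hψ1 hedge hgen2 hfin2 hsymm2
  haveI hfg2 : Group.FG G2 := Group.fg_iff.mpr ⟨S2, hgen2, hfin2⟩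
  haveI hfgQ : Group.FG (G2 ⧸ Z) :=
    Group.fg_of_surjective (f := QuotientGroup.mk' Z) (QuotientGroup.mk'_surjective Z)
  have htorQ : Monoid.IsTorsion (G2 ⧸ Z) := by
    have hgenQ : Subgroup.closure ((QuotientGroup.mk : G2 → G2 ⧸ Z) '' S2) = ⊤ := by
      have h1 := MonoidHom.map_closure (QuotientGroup.mk' Z) S2
      rw [hgen2] at h1
      have hcoe : ⇑(QuotientGroup.mk' Z) = (QuotientGroup.mk : G2 → G2 ⧸ Z) := rfl
      rw [hcoe] at h1
      rw [← h1]
      exact Subgroup.map_top_of_surjective _ (QuotientGroup.mk'_surjective Z)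
    intro q
    have hq : q ∈ Subgroup.closure ((QuotientGroup.mk : G2 → G2 ⧸ Z) '' S2) := by
      rw [hgenQ]; trivial
    have hmem : q ∈ CommGroup.torsion (G2 ⧸ Z) := by
      refine (Subgroup.closure_le (CommGroup.torsion (G2 ⧸ Z))).mpr ?_ hq
      rintro _ ⟨u, hu, rfl⟩
      show IsOfFinOrder _
      obtain ⟨N, hN, huN⟩ := hWall u hu
      refine isOfFinOrder_iff_pow_eq_one.2 ⟨N, hN, ?_⟩
      rw [← QuotientGroup.mk_pow]
      exact (QuotientGroup.eq_one_iff _).2 huN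
    exact (CommGroup.mem_torsion q).mp hmem
  haveI hfinQ : Finite (G2 ⧸ Z) := CommGroup.finite_of_fg_torsion (G2 ⧸ Z) htorQ
  set N := Nat.card (G2 ⧸ Z) with hNdef
  have hN0 : 0 < N := Nat.card_pos
  have hxNZ : ∀ x : G2, x ^ N ∈ Z := by
    intro x
    rw [← QuotientGroup.eq_one_iff, QuotientGroup.mk_pow]
    exact pow_card_eq_one'
  -- transport to the G1 side
  set Z1 : Subgroup G1 :=
    { carrier := {g | ψ g ∈ Z}
      one_mem' := by show ψ 1 ∈ Z; rw [hψ1]; exact Z.one_mem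
      mul_mem' := by
        intro g h hg hh
        show ψ (g * h) ∈ Z
        have h1 : ψ (g * h) = m2 ψ (ψ g) (ψ h) := by
          apply ψ.symm.injective; simp
        rw [h1, (mem_Zsub_iff ψ hψ1 (ψ h)).1 hh (ψ g)]
        exact Z.mul_mem hg hh
      inv_mem' := by
        intro g hg
        show ψ g⁻¹ ∈ Z
        have h1 : ψ g⁻¹ = i2 ψ (ψ g) := by
          apply ψ.symm.injective; simp
        rw [h1, i2_of_mem_Zsub ψ hψ1 hg]
        exact Z.inv_mem hg } with hZ1def
  have hZiff : ∀ u v : G2, m2 ψ (i2 ψ u) v ∈ Z ↔ u⁻¹ * v ∈ Z := by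
    intro u v
    constructor
    · intro h
      have h3 : m2 ψ u (m2 ψ (i2 ψ u) v) = u * (m2 ψ (i2 ψ u) v) :=
        (mem_Zsub_iff ψ hψ1 _).1 h u
      rw [m2_m2_i2] at h3
      have h4 : u⁻¹ * v = m2 ψ (i2 ψ u) v := by
        conv_lhs => rw [h3]
        group
      rw [h4]; exact h
    · intro h
      have h4 : u * (u⁻¹ * v) = m2 ψ u (u⁻¹ * v) :=
        ((mem_Zsub_iff ψ hψ1 _).1 h u).symm
      have h5 : m2 ψ (i2 ψ u) v = u⁻¹ * v := by
        conv_lhs => rw [show v = u * (u⁻¹ * v) by group, h4]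
        rw [m2_i2_m2]
      rw [h5]; exact h
  have hrel : ∀ x y : G1,
      (QuotientGroup.leftRel Z1) x y ↔ (QuotientGroup.leftRel Z) (ψ x) (ψ y) := by
    intro x y
    rw [QuotientGroup.leftRel_apply, QuotientGroup.leftRel_apply]
    have h6 : ψ (x⁻¹ * y) = m2 ψ (i2 ψ (ψ x)) (ψ y) := by
      apply ψ.symm.injective; simp
    show ψ (x⁻¹ * y) ∈ Z ↔ (ψ x)⁻¹ * ψ y ∈ Z
    rw [h6]
    exact hZiff (ψ x) (ψ y)
  have e : (G1 ⧸ Z1) ≃ (G2 ⧸ Z) := Quotient.congr ψ hrel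
  haveI hfinQ1 : Finite (G1 ⧸ Z1) := Finite.of_equiv _ e.symm
  have hcard : Nat.card (G1 ⧸ Z1) = N := by rw [hNdef]; exact Nat.card_congr e
  have hp2NZ : ∀ u : G2, p2 ψ u N ∈ Z := by
    intro u
    have h8 : ((ψ.symm u : G1) : G1 ⧸ Z1) ^ N = 1 := by
      rw [← hcard]; exact pow_card_eq_one'
    have h7 : (ψ.symm u) ^ N ∈ Z1 := by
      rw [← QuotientGroup.eq_one_iff, QuotientGroup.mk_pow]
      exact h8
    exact h7
  -- the defect function
  set dl : G2 → G2 := fun x => p2 ψ x N * (x ^ N)⁻¹ with hdldef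
  have hdlZ : ∀ x, dl x ∈ Z := fun x => Z.mul_mem (hp2NZ x) (Z.inv_mem (hxNZ x))
  set k : G2 → G2 → G2 := fun x s => m2 ψ (i2 ψ x) (x * s) with hkdef
  have hkS : ∀ x : G2, ∀ s ∈ S2, k x s ∈ S2 := by
    intro x s hs
    apply (hedge x (x * s)).1
    simpa using hs
  have hxk : ∀ x s : G2, m2 ψ x (k x s) = x * s := fun x s => m2_m2_i2 ψ x (x * s)
  have hstep : ∀ x s : G2, dl (x * s) * (dl x)⁻¹ = p2 ψ (k x s) N * (s ^ N)⁻¹ := by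
    intro x s
    have h1 : x * s = m2 ψ x (k x s) := (hxk x s).symm
    have h2 : p2 ψ (x * s) N = m2 ψ (p2 ψ x N) (p2 ψ (k x s) N) := by
      rw [h1, ← m2_p2]
    have h4 : m2 ψ (p2 ψ x N) (p2 ψ (k x s) N) = p2 ψ (k x s) N * p2 ψ x N := by
      rw [m2_comm]
      exact (mem_Zsub_iff ψ hψ1 _).1 (hp2NZ x) _
    show p2 ψ (x * s) N * ((x * s) ^ N)⁻¹ * (p2 ψ x N * (x ^ N)⁻¹)⁻¹ = _
    rw [h2, h4, mul_pow]
    exact step_alg (p2 ψ (k x s) N) (p2 ψ x N) (x ^ N) (s ^ N)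
  set S2f := hfin2.toFinset with hS2fdef
  have hmem_iff : ∀ u : G2, u ∈ S2f ↔ u ∈ S2 := fun u => hfin2.mem_toFinset
  have hi2S : ∀ u ∈ S2, i2 ψ u ∈ S2 := by
    intro u hu
    have h1 := (hedge u 1).1 (by simpa using hsymm2 u hu)
    rwa [m2_one ψ hψ1] at h1
  have harm : ∀ x : G2, ∏ s ∈ S2f, (dl (x * s) * (dl x)⁻¹) = 1 := by
    intro x
    have h1 : ∏ s ∈ S2f, (dl (x * s) * (dl x)⁻¹)
        = ∏ s ∈ S2f, (p2 ψ (k x s) N * (s ^ N)⁻¹) :=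
      Finset.prod_congr rfl (fun s _ => hstep x s)
    rw [h1, Finset.prod_mul_distrib]
    have h2 : ∏ s ∈ S2f, p2 ψ (k x s) N = ∏ u ∈ S2f, p2 ψ u N := by
      refine Finset.prod_bij' (fun s _ => k x s) (fun u _ => x⁻¹ * m2 ψ x u)
        ?_ ?_ ?_ ?_ ?_
      · intro s hss
        exact (hmem_iff _).2 (hkS x s ((hmem_iff s).1 hss))
      · intro u huu
        show x⁻¹ * m2 ψ x u ∈ S2f
        apply (hmem_iff _).2
        apply (hedge x (m2 ψ x u)).2
        rw [m2_i2_m2]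
        exact (hmem_iff u).1 huu
      · intro s hss
        show x⁻¹ * m2 ψ x (k x s) = s
        rw [hxk x s]
        group
      · intro u huu
        show m2 ψ (i2 ψ x) (x * (x⁻¹ * m2 ψ x u)) = u
        rw [mul_inv_cancel_left, m2_i2_m2]
      · intro s hss
        rfl
    rw [h2]
    have h3 : ∏ u ∈ S2f, p2 ψ u N = 1 := by
      refine Finset.prod_involution (fun u _ => i2 ψ u) ?_ ?_ ?_ ?_
      · intro u huu
        have h5 : p2 ψ (i2 ψ u) N = i2 ψ (p2 ψ u N) := by
          apply ψ.symm.injective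
          simp [inv_pow]
        rw [h5, i2_of_mem_Zsub ψ hψ1 (hp2NZ u), mul_inv_cancel]
      · intro u huu _
        intro hcon
        have h5 : (ψ.symm u)⁻¹ = ψ.symm u := by
          have := congrArg ψ.symm hcon
          simpa using this
        have h6 : (ψ.symm u) ^ 2 = 1 := by
          rw [pow_two]
          exact mul_eq_one_iff_inv_eq.mpr h5
        have h7 : ψ.symm u = 1 := tf_pow_eq_one tf1 (by norm_num) h6
        have h8 : u = 1 := by
          have := congrArg ψ h7
          rwa [Equiv.apply_symm_apply, hψ1] at this
        rw [h8] at huu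
        exact hid2 ((hmem_iff 1).1 huu)
      · intro u huu
        exact (hmem_iff _).2 (hi2S u ((hmem_iff u).1 huu))
      · intro u huu
        apply ψ.symm.injective
        simp
    have h4 : ∏ s ∈ S2f, (s ^ N)⁻¹ = 1 := by
      rw [Finset.prod_inv_distrib, Finset.prod_pow]
      rw [symprod tf2 S2f (fun u hu => (hmem_iff _).2 (hsymm2 u ((hmem_iff u).1 hu)))
        (fun hc => hid2 ((hmem_iff 1).1 hc))]
      rw [one_pow, inv_one]
    rw [h3, h4, one_mul]
  -- dl factors through the finite quotient
  have hdlcoset : ∀ x z : G2, z ∈ Z → dl (x * z) = dl x := by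
    intro x z hz
    have h1 : x * z = m2 ψ x z := ((mem_Zsub_iff ψ hψ1 z).1 hz x).symm
    have h2 : p2 ψ (x * z) N = m2 ψ (p2 ψ x N) (p2 ψ z N) := by rw [h1, ← m2_p2]
    have h3 : p2 ψ z N = z ^ N := p2_of_mem_Zsub ψ hψ1 hz N
    have h4 : m2 ψ (p2 ψ x N) (z ^ N) = p2 ψ x N * z ^ N :=
      (mem_Zsub_iff ψ hψ1 _).1 (Subgroup.pow_mem Z hz N) _
    show p2 ψ (x * z) N * ((x * z) ^ N)⁻¹ = p2 ψ x N * (x ^ N)⁻¹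
    rw [h2, h3, h4, mul_pow]
    exact coset_alg (p2 ψ x N) (x ^ N) (z ^ N)
  have hlift : ∀ a b : G2, (QuotientGroup.leftRel Z) a b → dl a = dl b := by
    intro a b hab
    have hz : a⁻¹ * b ∈ Z := QuotientGroup.leftRel_apply.1 hab
    have h1 : b = a * (a⁻¹ * b) := by group
    rw [h1]
    exact (hdlcoset a _ hz).symm
  have hrangefin : (Set.range dl).Finite := by
    have hsub : Set.range dl ⊆
        Set.range (fun q : G2 ⧸ Z => Quotient.liftOn' q dl hlift) := by
      rintro y ⟨x, rfl⟩
      exact ⟨QuotientGroup.mk x, rfl⟩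
    exact (Set.finite_range _).subset hsub
  -- maximum principle
  have hdl1 : ∀ x : G2, dl x = 1 := by
    intro x0
    by_contra hne
    obtain ⟨muf, hmuf, hmufne⟩ := exists_functional hfg2 tf2 hne
    set Df := hrangefin.toFinset with hDfdef
    have hDfmem : ∀ x : G2, dl x ∈ Df := fun x =>
      hrangefin.mem_toFinset.2 ⟨x, rfl⟩
    have hDfne : Df.Nonempty := ⟨dl 1, hDfmem 1⟩
    set M := Df.sup' hDfne muf with hMdef
    obtain ⟨d0, hd0, hd0M⟩ := Finset.exists_mem_eq_sup' hDfne muf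
    obtain ⟨xs, hxs⟩ : ∃ xst, dl xst = d0 := by
      have := hrangefin.mem_toFinset.1 hd0
      simpa using this
    have hbound : ∀ x, muf (dl x) ≤ M := fun x => Finset.le_sup' muf (hDfmem x)
    have hstepM : ∀ x, muf (dl x) = M → ∀ s ∈ S2, muf (dl (x * s)) = M := by
      intro x hx s hs
      have hsum : ∑ t ∈ S2f, (muf (dl (x * t)) - muf (dl x)) = 0 := by
        have h1 := harm x
        have h2 := homZ_prod hmuf S2f (fun t => dl (x * t) * (dl x)⁻¹)
        rw [h1, homZ_one hmuf] at h2
        have h3 : ∀ t ∈ S2f, muf (dl (x * t) * (dl x)⁻¹)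
            = muf (dl (x * t)) - muf (dl x) := by
          intro t _
          rw [hmuf, homZ_inv hmuf]
          ring
        rw [Finset.sum_congr rfl h3] at h2
        omega
      have hterm : ∀ t ∈ S2f, muf (dl (x * t)) - muf (dl x) ≤ 0 := by
        intro t _
        have := hbound (x * t)
        omega
      have hzero : ∀ t ∈ S2f, muf (dl (x * t)) - muf (dl x) = 0 := by
        by_contra hcon
        push_neg at hcon
        obtain ⟨t, ht, htne⟩ := hcon
        have hlt : muf (dl (x * t)) - muf (dl x) < 0 := lt_of_le_of_ne (hterm t ht) htne
        have hsum2 : ∑ u ∈ S2f, (muf (dl (x * u)) - muf (dl x)) < 0 := by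
          calc ∑ u ∈ S2f, (muf (dl (x * u)) - muf (dl x))
              ≤ ∑ u ∈ S2f \ {t}, (muf (dl (x * u)) - muf (dl x))
                + (muf (dl (x * t)) - muf (dl x)) := by
                rw [Finset.sum_eq_sum_sdiff_singleton_add ht]
            _ < 0 + 0 := by
                apply add_lt_add_of_le_of_lt _ hlt
                apply Finset.sum_nonpos
                intro u hu
                exact hterm u (Finset.mem_sdiff.1 hu).1
            _ = 0 := by ring
        omega
      have h5 := hzero s ((hmem_iff s).2 hs)
      omega
    have hgood : ∀ g : G2, ∀ x, (muf (dl x) = M ↔ muf (dl (x * g)) = M) := by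
      intro g
      have hg : g ∈ Subgroup.closure S2 := by rw [hgen2]; trivial
      refine Subgroup.closure_induction ?_ ?_ ?_ ?_ hg
      · intro u hu x
        constructor
        · intro hx; exact hstepM x hx u hu
        · intro hxs'
          have h5 := hstepM (x * u) hxs' u⁻¹ (hsymm2 u hu)
          rwa [mul_assoc, mul_inv_cancel, mul_one] at h5
      · intro x; rw [mul_one]
      · intro g h _ _ hgi hhi x
        rw [← mul_assoc]
        exact (hgi x).trans (hhi (x * g))
      · intro g _ hgi x
        have h5 := hgi (x * g⁻¹)
        rw [mul_assoc, inv_mul_cancel, mul_one] at h5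
        exact h5.symm
    have hallx : ∀ x, muf (dl x) = M := by
      intro x
      have hgs : muf (dl xs) = M := by rw [hxs, ← hd0M]
      have h5 := (hgood (xs⁻¹ * x) xs).1 hgs
      rwa [mul_inv_cancel_left] at h5
    have hdl1' : dl 1 = 1 := by
      show p2 ψ 1 N * ((1 : G2) ^ N)⁻¹ = 1
      have h6 : p2 ψ 1 N = 1 := by
        apply ψ.symm.injective
        simp [symm_one ψ hψ1]
      rw [h6, one_pow, inv_one, mul_one]
    have hM0 : M = 0 := by
      have h5 := hallx 1
      rw [hdl1', homZ_one hmuf] at h5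
      omega
    have h6 := hallx x0
    rw [hM0] at h6
    exact hmufne h6
  -- conclusion: S2 ⊆ Z
  intro s hs
  intro x
  have h1 : p2 ψ (k x s) N = s ^ N := by
    have h2 := hstep x s
    rw [hdl1 (x * s), hdl1 x, inv_one, mul_one] at h2
    have h3 : p2 ψ (k x s) N * (s ^ N)⁻¹ = 1 := h2.symm
    exact mul_inv_eq_one.mp h3
  have h3 : p2 ψ (k x s) N = (k x s) ^ N := by
    have h4 := hdl1 (k x s)
    have h5 : p2 ψ (k x s) N * ((k x s) ^ N)⁻¹ = 1 := h4
    exact mul_inv_eq_one.mp h5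
  have h4 : (k x s) ^ N = s ^ N := by rw [← h3, h1]
  have h5 : k x s = s := tf_pow_injective tf2 (Nat.pos_iff_ne_zero.mp hN0) h4
  calc m2 ψ x s = m2 ψ x (k x s) := by rw [h5]
    _ = x * s := hxk x s

end Main

end RyabchenkoProof

/-- **Proposition 2.1 (Ryabchenko).** -/
theorem cayley_iso_is_affine_abelian
    {G1 G2 : Type*} [CommGroup G1] [CommGroup G2]
    (htf1 : Monoid.IsTorsionFree G1) (htf2 : Monoid.IsTorsionFree G2)
    (S1 : Set G1) (S2 : Set G2)
    (hfin1 : S1.Finite) (hfin2 : S2.Finite)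
    (hsymm1 : ∀ s ∈ S1, s⁻¹ ∈ S1) (hsymm2 : ∀ s ∈ S2, s⁻¹ ∈ S2)
    (hid1 : (1 : G1) ∉ S1) (hid2 : (1 : G2) ∉ S2)
    (hgen1 : Subgroup.closure S1 = ⊤) (hgen2 : Subgroup.closure S2 = ⊤)
    (φ : cayleyGraph S1 hsymm1 hid1 ≃g cayleyGraph S2 hsymm2 hid2) :
    ∃ (α : G1 ≃* G2) (h : G2), ∀ x : G1, φ x = h * α x := by
  classical
  open RyabchenkoProof in
  set c : G2 := φ 1 with hcdef
  set ψ : G1 ≃ G2 := φ.toEquiv.trans (Equiv.mulLeft c⁻¹) with hψdef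
  have hψx : ∀ x : G1, ψ x = c⁻¹ * φ x := fun x => rfl
  have hψ1 : ψ 1 = 1 := by rw [hψx 1, ← hcdef, inv_mul_cancel]
  have hadj : ∀ x y : G1, x⁻¹ * y ∈ S1 ↔ (φ x)⁻¹ * (φ y) ∈ S2 := by
    intro x y
    exact (φ.map_adj_iff (v := x) (w := y)).symm
  have hedge : ∀ u v : G2, u⁻¹ * v ∈ S2 ↔ RyabchenkoProof.m2 ψ (RyabchenkoProof.i2 ψ u) v ∈ S2 := by
    intro u v
    have hu : u = ψ (ψ.symm u) := (ψ.apply_symm_apply u).symm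
    have hv : v = ψ (ψ.symm v) := (ψ.apply_symm_apply v).symm
    set a := ψ.symm u with hadef
    set b := ψ.symm v with hbdef
    have h1 : u⁻¹ * v = (φ a)⁻¹ * φ b := by
      rw [hu, hv, hψx a, hψx b]
      group
    have h2 : RyabchenkoProof.m2 ψ (RyabchenkoProof.i2 ψ u) v = ψ (a⁻¹ * b) := by
      apply ψ.symm.injective
      simp [RyabchenkoProof.m2, RyabchenkoProof.i2]
      rfl
    rw [h1, h2, ← hadj a b]
    have h3 := hadj 1 (a⁻¹ * b)
    rw [inv_one, one_mul] at h3
    rw [h3, hψx (a⁻¹ * b)]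
  have hcore := RyabchenkoProof.core ψ htf1 htf2 hψ1 hedge hgen2 hfin2 hsymm2 hid2
  have hmul : ∀ x y : G1, ψ (x * y) = ψ x * ψ y := by
    intro x y
    have h1 : ψ (x * y) = RyabchenkoProof.m2 ψ (ψ x) (ψ y) := by
      apply ψ.symm.injective
      simp [RyabchenkoProof.m2]
    rw [h1, hcore (ψ x) (ψ y)]
  refine ⟨MulEquiv.mk' ψ hmul, c, ?_⟩
  intro x
  show (φ x : G2) = c * ψ x
  rw [hψx x, mul_inv_cancel_left]
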